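/- For any regex R over Σ, if the star R* is ambiguous then R* is infinitely ambiguous; equivalently, R* can never be finitely ambiguous. (Paper's Theorem 3(b) and Appendix Lemma 2.) -/

import Mathlib

/-! Shared definitions: words, word power, parse trees of regular expressions,
(un)ambiguity, finite/infinite ambiguity, and the Brabrand–Thomsen overlap. -/

universe u

variable {α : Type u}

/-- `wpow w n` is the `n`-fold concatenation `w^n` of the word `w` with itself. -/
def wpow (w : List α) : ℕ → List α
  | 0 => []
  | n + 1 => w ++ wpow w n

/-- Parse trees of a regular expression for a word, defined inductively:
the regex `ε` has a unique parse tree for the empty word; the character regex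
for `a` has a unique parse tree for the word `[a]`; a parse tree of `R₁ + R₂`
(alternation) for `w` is a parse tree of `R₁` for `w` or a parse tree of `R₂`
for `w` (the two sides distinct); a parse tree of `R₁ * R₂` (concatenation)
for `w` is a decomposition `w = u ++ v` with parse trees of `R₁` for `u` and
of `R₂` for `v`; a parse tree of `R*` for `w` is a finite list of words
(possibly empty entries) concatenating to `w` with a parse tree of `R` for each. -/
inductive ParseTree : RegularExpression α → List α → Type u where
  | eps : ParseTree RegularExpression.epsilon []
  | char (a : α) : ParseTree (RegularExpression.char a) [a]
  | plusLeft {R₁ R₂ : RegularExpression α} {w : List α} :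
      ParseTree R₁ w → ParseTree (R₁ + R₂) w
  | plusRight {R₁ R₂ : RegularExpression α} {w : List α} :
      ParseTree R₂ w → ParseTree (R₁ + R₂) w
  | comp {R₁ R₂ : RegularExpression α} {u v : List α} :
      ParseTree R₁ u → ParseTree R₂ v → ParseTree (R₁ * R₂) (u ++ v)
  | starNil {R : RegularExpression α} : ParseTree R.star []
  | starCons {R : RegularExpression α} {u v : List α} :
      ParseTree R u → ParseTree R.star v → ParseTree R.star (u ++ v)

/-- A regex is unambiguous if every word has at most one parse tree of it. -/
def Unambiguous (R : RegularExpression α) : Prop :=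
  ∀ (w : List α) (t₁ t₂ : ParseTree R w), t₁ = t₂

/-- A regex is ambiguous if some word has two distinct parse trees of it. -/
def Ambiguous (R : RegularExpression α) : Prop :=
  ∃ (w : List α) (t₁ t₂ : ParseTree R w), t₁ ≠ t₂

/-- The word `w` has at least `k` distinct parse trees of `R`. -/
def HasAtLeastTrees (R : RegularExpression α) (w : List α) (k : ℕ) : Prop :=
  ∃ l : List (ParseTree R w), l.Nodup ∧ k ≤ l.length

/-- Every word has at most `k` parse trees of `R`. -/
def BoundedBy (R : RegularExpression α) (k : ℕ) : Prop :=
  ∀ (w : List α) (l : List (ParseTree R w)), l.Nodup → l.length ≤ k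

/-- `R` is finitely ambiguous: ambiguous, with a uniform bound on the number
of parse trees of any word. -/
def FinitelyAmbiguous (R : RegularExpression α) : Prop :=
  Ambiguous R ∧ ∃ k : ℕ, BoundedBy R k

/-- `R` is infinitely ambiguous: for every `k` some word has more than `k`
parse trees of `R`. -/
def InfinitelyAmbiguous (R : RegularExpression α) : Prop :=
  ∀ k : ℕ, ∃ w : List α, HasAtLeastTrees R w (k + 1)

/-- Languages `L₁` and `L₂` overlap (nonemptiness of the Brabrand–Thomsen
overlap operator): there are words `x`, `y` and a nonempty word `a` with
`x ∈ L₁`, `x ++ a ∈ L₁`, `a ++ y ∈ L₂`, and `y ∈ L₂`. -/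
def Overlaps (L₁ L₂ : Language α) : Prop :=
  ∃ x y a : List α, a ≠ [] ∧ x ∈ L₁ ∧ x ++ a ∈ L₁ ∧ a ++ y ∈ L₂ ∧ y ∈ L₂

namespace Scratch

variable {R : RegularExpression α}

def Chunk (R : RegularExpression α) : Type u := Σ u : List α, ParseTree R u

def flat : List (Chunk R) → List α
  | [] => []
  | c :: l => c.1 ++ flat l

def ofChunks : (l : List (Chunk R)) → ParseTree R.star (flat l)
  | [] => ParseTree.starNil
  | c :: l => ParseTree.starCons c.2 (ofChunks l)

def chunks : {w : List α} → ParseTree R.star w → List (Chunk R)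
  | _, ParseTree.starNil => []
  | _, ParseTree.starCons (u := u) h t => ⟨u, h⟩ :: chunks t

theorem flat_chunks : ∀ {w : List α} (t : ParseTree R.star w), flat (chunks t) = w
  | _, ParseTree.starNil => by simp [chunks, flat]
  | _, ParseTree.starCons h t => by
      simp [chunks, flat, flat_chunks t]

theorem chunks_inj' : ∀ {w w' : List α} (t : ParseTree R.star w)
    (s : ParseTree R.star w'), chunks t = chunks s → w = w' ∧ HEq t s
  | _, _, ParseTree.starNil, ParseTree.starNil, _ => ⟨rfl, HEq.rfl⟩
  | _, _, ParseTree.starNil, ParseTree.starCons h s, he => by simp [chunks] at he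
  | _, _, ParseTree.starCons h t, ParseTree.starNil, he => by simp [chunks] at he
  | _, _, ParseTree.starCons (u := u) h t, ParseTree.starCons (u := u') h' s, he => by
      rw [chunks.eq_2, chunks.eq_2] at he
      replace he := List.cons.inj he
      obtain ⟨h1, hc⟩ := he
      obtain ⟨hu, hh⟩ := Sigma.mk.inj_iff.mp h1
      obtain ⟨hv, hs⟩ := chunks_inj' t s hc
      subst hu; subst hv
      exact ⟨rfl, heq_of_eq (by rw [eq_of_heq hh, eq_of_heq hs])⟩

theorem chunks_inj {w : List α} {t s : ParseTree R.star w}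
    (h : chunks t = chunks s) : t = s :=
  eq_of_heq (chunks_inj' t s h).2

theorem chunks_ofChunks : ∀ l : List (Chunk R), chunks (ofChunks l) = l
  | [] => chunks.eq_1
  | c :: l => by
    exact (chunks.eq_2 _ _ c.2 (ofChunks l)).trans (congrArg (c :: ·) (chunks_ofChunks l))

def tcast {w w' : List α} (e : w = w') (t : ParseTree R.star w) :
    ParseTree R.star w' := e ▸ t

theorem chunks_tcast {w w' : List α} (e : w = w') (t : ParseTree R.star w) :
    chunks (tcast e t) = chunks t := by subst e; rfl

end Scratch

namespace Scratch2
universe v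
theorem wpow_add {β : Type v} (w : List β) (m n : ℕ) :
    wpow w (m + n) = wpow w m ++ wpow w n := by
  induction m with
  | zero => simp [wpow]
  | succ m ih => rw [Nat.succ_add]; simp [wpow, ih]

theorem wpow_length {β : Type v} (w : List β) (n : ℕ) :
    (wpow w n).length = n * w.length := by
  induction n with
  | zero => simp [wpow]
  | succ n ih => simp [wpow, ih, Nat.succ_mul]; omega

theorem key_aux {β : Type v} {A B : List β} (hlen : A.length = B.length)
    {k i j : ℕ} (hij : i < j) (hj : j ≤ k)
    (h : wpow B i ++ wpow A (k - i) = wpow B j ++ wpow A (k - j)) : A = B := by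
  rw [show wpow B j = wpow B i ++ wpow B (j - i) by
        rw [← wpow_add]; congr 1; omega,
      List.append_assoc] at h
  have h2 : wpow A (k - i) = wpow B (j - i) ++ wpow A (k - j) :=
    List.append_cancel_left h
  obtain ⟨p, hp⟩ : ∃ p, k - i = p + 1 := ⟨k - i - 1, by omega⟩
  obtain ⟨q, hq⟩ : ∃ q, j - i = q + 1 := ⟨j - i - 1, by omega⟩
  rw [hp, hq] at h2
  have h3 : A ++ wpow A p = B ++ (wpow B q ++ wpow A (k - j)) := by
    simpa [wpow, List.append_assoc] using h2
  have h4 : List.take A.length (A ++ wpow A p)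
      = List.take A.length (B ++ (wpow B q ++ wpow A (k - j))) := by rw [h3]
  rwa [List.take_left' rfl, List.take_left' hlen.symm] at h4

theorem key {β : Type v} {A B : List β} (hAB : A ≠ B) {k i j : ℕ}
    (hi : i ≤ k) (hj : j ≤ k)
    (h : wpow B i ++ wpow A (k - i) = wpow B j ++ wpow A (k - j)) : i = j := by
  by_cases hlen : A.length = B.length
  · rcases Nat.lt_trichotomy i j with hlt | heq | hgt
    · exact absurd (key_aux hlen hlt hj h) hAB
    · exact heq
    · exact absurd (key_aux hlen hgt hi h.symm) hAB
  · have hl := congrArg List.length h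
    simp only [List.length_append, wpow_length] at hl
    have hZ : (i : ℤ) * B.length + ((k : ℤ) - i) * A.length
        = (j : ℤ) * B.length + ((k : ℤ) - j) * A.length := by
      zify [hi, hj] at hl; linarith
    have h2 : ((i : ℤ) - j) * ((B.length : ℤ) - A.length) = 0 := by
      linear_combination hZ
    rcases mul_eq_zero.mp h2 with h3 | h3
    · omega
    · exfalso; apply hlen; omega
end Scratch2

namespace Scratch
theorem flat_append (l₁ l₂ : List (Chunk R)) :
    flat (l₁ ++ l₂) = flat l₁ ++ flat l₂ := by
  induction l₁ with
  | nil => simp [flat]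
  | cons c l ih => simp [flat, ih]

theorem flat_wpow (L : List (Chunk R)) (n : ℕ) :
    flat (wpow L n) = wpow (flat L) n := by
  induction n with
  | zero => simp [wpow, flat]
  | succ n ih => simp [wpow, flat_append, ih]
end Scratch


open Scratch Scratch2 in
/-- Theorem 3(b) / Appendix Lemma 2: for any regex `R`, if `R*` is ambiguous
then it is infinitely ambiguous; equivalently, `R*` is never finitely
ambiguous. -/
theorem stmt_5 {α : Type u} (R : RegularExpression α) :
    (Ambiguous R.star → InfinitelyAmbiguous R.star) ∧
      ¬ FinitelyAmbiguous R.star := by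
  have main : Ambiguous R.star → InfinitelyAmbiguous R.star := by
    rintro ⟨w, t₁, t₂, hne⟩ k
    have hL : chunks t₁ ≠ chunks t₂ := fun h => hne (chunks_inj h)
    have hw1 : flat (chunks t₁) = w := flat_chunks t₁
    have hw2 : flat (chunks t₂) = w := flat_chunks t₂
    refine ⟨wpow w k, ?_⟩
    have he : ∀ i : ℕ,
        flat (wpow (chunks t₂) (min i k) ++ wpow (chunks t₁) (k - min i k))
          = wpow w k := by
      intro i
      rw [flat_append, flat_wpow, flat_wpow, hw1, hw2, ← wpow_add]
      congr 1
      omega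
    refine ⟨(List.range (k + 1)).map
      (fun i => tcast (he i) (ofChunks _)), ?_, by simp⟩
    apply List.Nodup.map_on ?_ List.nodup_range
    intro i hi j hj hfe
    have hc := congrArg chunks hfe
    rw [chunks_tcast, chunks_tcast, chunks_ofChunks, chunks_ofChunks] at hc
    have hi' : i ≤ k := by have := List.mem_range.mp hi; omega
    have hj' : j ≤ k := by have := List.mem_range.mp hj; omega
    rw [min_eq_left hi', min_eq_left hj'] at hc
    exact key hL hi' hj' hc
  refine ⟨main, ?_⟩
  rintro ⟨hamb, k, hbd⟩
  obtain ⟨w', l, hnd, hlen⟩ := main hamb k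
  have := hbd w' l hnd
  omega
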